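/- Assume ∫_τ^∞ ds/r(s) = ∞ and ∫_τ^∞ p(s) ds = ∞. Then every solution x of (E) is oscillatory. -/

import Mathlib

open MeasureTheory Set Filter

private lemma icc_glue {h : ℝ → ℝ} {a b c : ℝ} (hab : a ≤ b)
    (h1 : AntitoneOn h (Icc a b)) (h2 : AntitoneOn h (Icc b c)) :
    AntitoneOn h (Icc a c) := by
  intro u hu v hv huv
  rcases le_total v b with hvb | hbv
  · exact h1 ⟨hu.1, huv.trans hvb⟩ ⟨hv.1, hvb⟩ huv
  · rcases le_total u b with hub | hbu
    · have hbc : b ≤ c := hbv.trans hv.2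
      calc h v ≤ h b := h2 ⟨le_rfl, hbc⟩ ⟨hbv, hv.2⟩ hbv
        _ ≤ h u := h1 ⟨hu.1, hub⟩ ⟨hab, le_rfl⟩ hub
    · exact h2 ⟨hbu, hu.2⟩ ⟨hbu.trans huv, hv.2⟩ huv

private lemma antitoneOn_glue (t : ℕ → ℝ) (ht : StrictMono t) (htop : Tendsto t atTop atTop)
    (h : ℝ → ℝ) (hc : ContinuousOn h (Ici (t 0)))
    (hd : ∀ k : ℕ, ∀ s ∈ Ioo (t k) (t (k+1)), ∃ d, d ≤ 0 ∧ HasDerivAt h d s) :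
    AntitoneOn h (Ici (t 0)) := by
  have piece : ∀ k, AntitoneOn h (Icc (t k) (t (k+1))) := by
    intro k
    apply antitoneOn_of_deriv_nonpos (convex_Icc _ _)
    · exact hc.mono (Icc_subset_Ici_self.trans (Ici_subset_Ici.2 (ht.monotone (Nat.zero_le k))))
    · intro s hs
      rw [interior_Icc] at hs
      obtain ⟨d, _, hdd⟩ := hd k s hs
      exact hdd.differentiableAt.differentiableWithinAt
    · intro s hs
      rw [interior_Icc] at hs
      obtain ⟨d, hd0, hdd⟩ := hd k s hs
      rw [hdd.deriv]; exact hd0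
  have hmain : ∀ n : ℕ, AntitoneOn h (Icc (t 0) (t n)) := by
    intro n
    induction n with
    | zero => intro u hu v hv huv; have : u = v := le_antisymm huv (hv.2.trans hu.1); rw [this]
    | succ n ih => exact icc_glue (ht.monotone (Nat.zero_le n)) ih (piece n)
  intro u hu v hv huv
  obtain ⟨n, hn⟩ := (htop.eventually_ge_atTop v).exists
  exact hmain n ⟨hu, huv.trans hn⟩ ⟨hv, hn⟩ huv

private lemma tendsto_primitive_atTop {a : ℝ} {g : ℝ → ℝ} (hg : ContinuousOn g (Ici a))
    (hg0 : ∀ s ∈ Ici a, 0 ≤ g s)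
    (hI : ∫⁻ s in Ioi a, ENNReal.ofReal (g s) = ⊤) :
    Tendsto (fun v => ∫ s in a..v, g s) atTop atTop := by
  have hint : ∀ u v : ℝ, a ≤ u → IntervalIntegrable g volume u v ∨ True := fun _ _ _ => Or.inr trivial
  have hii : ∀ {u v : ℝ}, a ≤ u → u ≤ v → IntervalIntegrable g volume u v := by
    intro u v hu huv
    apply ContinuousOn.intervalIntegrable
    apply hg.mono
    rw [uIcc_of_le huv]
    exact fun s hs => hu.trans hs.1
  -- monotonicity of the primitive
  have hmono : MonotoneOn (fun v => ∫ s in a..v, g s) (Ici a) := by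
    intro u hu v hv huv
    have h1 : (∫ s in a..u, g s) + ∫ s in u..v, g s = ∫ s in a..v, g s :=
      intervalIntegral.integral_add_adjacent_intervals (hii le_rfl hu) (hii hu huv)
    have h2 : 0 ≤ ∫ s in u..v, g s := by
      apply intervalIntegral.integral_nonneg huv
      intro s hs; exact hg0 s (hu.trans hs.1)
    linarith
  -- unboundedness
  have hub : ∀ M : ℝ, ∃ v, a ≤ v ∧ M ≤ ∫ s in a..v, g s := by
    intro M
    by_contra hcon
    push_neg at hcon
    have hbound : ∀ n : ℕ, (∫⁻ s in Ioc a (a + n), ENNReal.ofReal (g s)) ≤ ENNReal.ofReal M := by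
      intro n
      have han : a ≤ a + n := le_add_of_nonneg_right (Nat.cast_nonneg n)
      have hIoc : Ioc a (a + n) ⊆ Ici a := Ioc_subset_Icc_self.trans Icc_subset_Ici_self
      have hInt : IntegrableOn g (Ioc a (a + n)) volume :=
        (hii le_rfl han).1
      have heq : ENNReal.ofReal (∫ s in Ioc a (a + n), g s)
          = ∫⁻ s in Ioc a (a + n), ENNReal.ofReal (g s) := by
        apply ofReal_integral_eq_lintegral_ofReal hInt
        filter_upwards [ae_restrict_mem measurableSet_Ioc] with s hs
        exact hg0 s (hIoc hs)
      rw [← heq]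
      apply ENNReal.ofReal_le_ofReal
      rw [← intervalIntegral.integral_of_le han]
      exact (hcon _ han).le
    -- decompose the lintegral over Ioi a as a sup
    set μ := volume.restrict (Ioi a) with hμ
    have hgae : AEMeasurable (fun s => ENNReal.ofReal (g s)) μ :=
      ((hg.mono Ioi_subset_Ici_self).aemeasurable measurableSet_Ioi).ennreal_ofReal
    set F : ℕ → ℝ → ENNReal := fun n => (Ioc a (a + n)).indicator (fun s => ENNReal.ofReal (g s))
      with hF
    have hFmeas : ∀ n, AEMeasurable (F n) μ := fun n => hgae.indicator measurableSet_Ioc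
    have hFmono : ∀ᵐ s ∂μ, Monotone fun n => F n s := by
      refine Eventually.of_forall fun s => ?_
      intro m n hmn
      exact indicator_le_indicator_of_subset
        (Ioc_subset_Ioc le_rfl (by linarith [(Nat.cast_le (α := ℝ)).2 hmn]))
        (fun _ => zero_le) s
    have hsup : ∀ᵐ s ∂μ, (⨆ n, F n s) = ENNReal.ofReal (g s) := by
      filter_upwards [ae_restrict_mem measurableSet_Ioi] with s hs
      obtain ⟨n, hn⟩ := exists_nat_ge (s - a)
      apply le_antisymm
      · exact iSup_le fun n => indicator_le_self' (fun _ _ => zero_le) s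
      · refine le_iSup_of_le n ?_
        have hmem : s ∈ Ioc a (a + (n:ℝ)) := ⟨hs, by linarith⟩
        have : F n s = ENNReal.ofReal (g s) := indicator_of_mem hmem _
        rw [this]
    have hkey : ∫⁻ s, ENNReal.ofReal (g s) ∂μ = ⨆ n, ∫⁻ s, F n s ∂μ := by
      rw [← lintegral_iSup' hFmeas hFmono]
      exact lintegral_congr_ae (hsup.mono fun s h => h.symm)
    have hFn : ∀ n, ∫⁻ s, F n s ∂μ = ∫⁻ s in Ioc a (a + n), ENNReal.ofReal (g s) := by
      intro n
      rw [hF, lintegral_indicator measurableSet_Ioc, hμ,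
        Measure.restrict_restrict measurableSet_Ioc,
        inter_eq_self_of_subset_left Ioc_subset_Ioi_self]
    rw [hμ] at hkey
    rw [hI] at hkey
    have : (⊤ : ENNReal) ≤ ENNReal.ofReal M := by
      rw [hkey]
      exact iSup_le fun n => (hFn n).le.trans (hbound n)
    exact (ENNReal.ofReal_lt_top.not_ge this).elim
  rw [tendsto_atTop]
  intro M
  obtain ⟨v, hav, hv⟩ := hub M
  filter_upwards [eventually_ge_atTop v] with w hw
  exact hv.trans (hmono (mem_Ici.2 hav) (mem_Ici.2 (hav.trans hw)) hw)

private lemma key_lemma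
    (t ζ : ℕ → ℝ) (ht_mono : StrictMono t) (ht_top : Tendsto t atTop atTop)
    (hζ : ∀ k : ℕ, ζ k ∈ Icc (t k) (t (k+1)))
    (r : ℝ → ℝ) (hr_cont : ContinuousOn r (Ici (t 0)))
    (hr_pos : ∀ s ∈ Ici (t 0), 0 < r s)
    (f : ℝ → ℝ → ℝ)
    (hf_sign : ∀ s ∈ Ici (t 0), ∀ y : ℝ, y ≠ 0 → 0 < y * f s y)
    (x x' : ℝ → ℝ)
    (hx_deriv : ∀ s ∈ Ici (t 0), HasDerivAt x (x' s) s)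
    (hx'_cont : ContinuousOn x' (Ici (t 0)))
    (hE : ∀ k : ℕ, ∀ s ∈ Ioo (t k) (t (k+1)),
      HasDerivAt (fun u => r u * x' u) (-(f s (x (ζ k)))) s)
    (p : ℝ → ℝ) (hp_cont : ContinuousOn p (Ici (t 0)))
    (hp_nonneg : ∀ s ∈ Ici (t 0), 0 ≤ p s)
    (φ : ℝ → ℝ) (hφ_mono : Monotone φ)
    (hφ_sign : ∀ y : ℝ, y ≠ 0 → 0 < y * φ y)
    (hfp_pos : ∀ s ∈ Ici (t 0), ∀ y : ℝ, 0 < y → p s * φ y ≤ f s y)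
    (hr_int : ∫⁻ s in Ioi (t 0), ENNReal.ofReal (1 / r s) = ⊤)
    (hp_int : ∫⁻ s in Ioi (t 0), ENNReal.ofReal (p s) = ⊤)
    (T : ℝ) : ∃ v, T ≤ v ∧ x v ≤ 0 := by
  by_contra hcon
  push_neg at hcon
  -- basic setup
  obtain ⟨K1, hK1⟩ := (ht_top.eventually_ge_atTop (max T (t 0))).exists
  set K := K1 + 1 with hK
  set A := t K with hA
  have hA0 : t 0 < A := ht_mono (Nat.succ_pos K1)
  have hTA : T ≤ A := (le_max_left _ _).trans (hK1.trans (ht_mono.monotone (Nat.le_succ K1)))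
  have hIciA : Ici A ⊆ Ici (t 0) := Ici_subset_Ici.2 hA0.le
  have hxpos : ∀ v, A ≤ v → 0 < x v := fun v hv => hcon v (hTA.trans hv)
  have hζA : ∀ k, K ≤ k → A ≤ ζ k := fun k hk =>
    (ht_mono.monotone hk).trans (hζ k).1
  -- shifted sequence
  set t' : ℕ → ℝ := fun n => t (n + K) with ht'
  have ht'_mono : StrictMono t' := fun a b hab => ht_mono (by omega)
  have ht'_top : Tendsto t' atTop atTop := ht_top.comp (tendsto_add_atTop_nat K)
  have ht'0 : t' 0 = A := by simp [ht', hA]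
  -- g = r * x'
  set g : ℝ → ℝ := fun s => r s * x' s with hg
  have hg_cont : ContinuousOn g (Ici (t 0)) := hr_cont.mul hx'_cont
  have hfpos : ∀ k, K ≤ k → ∀ s ∈ Ici (t 0), 0 < f s (x (ζ k)) := by
    intro k hk s hs
    have hxz : 0 < x (ζ k) := hxpos _ (hζA k hk)
    have := hf_sign s hs (x (ζ k)) hxz.ne'
    nlinarith
  have hg_anti : AntitoneOn g (Ici A) := by
    rw [← ht'0]
    apply antitoneOn_glue t' ht'_mono ht'_top g (hg_cont.mono (by rw [ht'0]; exact hIciA))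
    intro k s hs
    have hs' : s ∈ Ioo (t (k + K)) (t (k + K + 1)) := by
      simpa [ht', add_right_comm] using hs
    refine ⟨-(f s (x (ζ (k + K)))), ?_, hE (k + K) s hs'⟩
    have hst : t 0 ≤ s := (hA0.le.trans (ht_mono.monotone (by omega) : A ≤ t (k+K))).trans hs'.1.le
    have := hfpos (k + K) (by omega) s hst
    linarith
  -- integral divergence facts
  have hrinv_cont : ContinuousOn (fun s => 1 / r s) (Ici (t 0)) :=
    continuousOn_const.div hr_cont (fun s hs => (hr_pos s hs).ne')
  have hR : Tendsto (fun v => ∫ s in (t 0)..v, 1 / r s) atTop atTop :=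
    tendsto_primitive_atTop hrinv_cont
      (fun s hs => one_div_nonneg.2 (hr_pos s hs).le) hr_int
  have hP : Tendsto (fun v => ∫ s in (t 0)..v, p s) atTop atTop :=
    tendsto_primitive_atTop hp_cont hp_nonneg hp_int
  have hii : ∀ {q : ℝ → ℝ}, ContinuousOn q (Ici (t 0)) → ∀ {u v : ℝ}, t 0 ≤ u → u ≤ v →
      IntervalIntegrable q volume u v := by
    intro q hq u v hu huv
    apply ContinuousOn.intervalIntegrable
    apply hq.mono
    rw [uIcc_of_le huv]
    exact fun s hs => hu.trans hs.1
  by_cases hcase : ∀ v ∈ Ici A, 0 ≤ g v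
  · -- Case 2 : r x' stays nonnegative
    have hx'nn : ∀ v ∈ Ici A, 0 ≤ x' v := by
      intro v hv
      have h1 := hcase v hv
      have h2 := hr_pos v (hIciA hv)
      by_contra hneg
      push_neg at hneg
      have h1' : 0 ≤ r v * x' v := h1
      nlinarith [mul_neg_of_pos_of_neg h2 hneg]
    have hx_mono : MonotoneOn x (Ici A) := by
      apply monotoneOn_of_deriv_nonneg (convex_Ici A)
      · exact fun s hs => (hx_deriv s (hIciA hs)).continuousAt.continuousWithinAt
      · intro s hs
        rw [interior_Ici] at hs
        exact (hx_deriv s (hIciA (mem_Ici.2 (le_of_lt hs)))).differentiableAt.differentiableWithinAt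
      · intro s hs
        rw [interior_Ici] at hs
        rw [(hx_deriv s (hIciA (mem_Ici.2 (le_of_lt hs)))).deriv]
        exact hx'nn s (mem_Ici.2 (le_of_lt hs))
    set m := x A with hm
    have hm_pos : 0 < m := hxpos A le_rfl
    set c := φ m with hc
    have hc_pos : 0 < c := by
      have := hφ_sign m hm_pos.ne'
      nlinarith
    have hφb : ∀ k, K ≤ k → c ≤ φ (x (ζ k)) := by
      intro k hk
      exact hφ_mono (hx_mono (mem_Ici.2 le_rfl) (mem_Ici.2 (hζA k hk)) (hζA k hk))
    -- P = primitive of p from A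
    set P : ℝ → ℝ := fun v => ∫ s in A..v, p s with hPdef
    have hPderiv : ∀ s, A ≤ s → HasDerivAt P (p s) s := by
      intro s hs
      have hs0 : t 0 < s := hA0.trans_le hs
      apply intervalIntegral.integral_hasDerivAt_right (hii hp_cont hA0.le hs)
      · exact (hp_cont.mono (Ioi_subset_Ici_self)).stronglyMeasurableAtFilter isOpen_Ioi s hs0
      · exact (hp_cont.continuousAt (Ici_mem_nhds hs0))
    set h : ℝ → ℝ := fun v => g v + c * P v with hh
    have hh_anti : AntitoneOn h (Ici A) := by
      rw [← ht'0]
      apply antitoneOn_glue t' ht'_mono ht'_top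
      · rw [ht'0]
        intro s hs
        exact ((hg_cont.mono hIciA) s hs).add
          (continuousWithinAt_const.mul ((hPderiv s hs).continuousAt.continuousWithinAt))
      · intro k s hs
        have hs' : s ∈ Ioo (t (k + K)) (t (k + K + 1)) := by
          simpa [ht', add_right_comm] using hs
        have hsA : A ≤ s := (ht_mono.monotone (by omega : K ≤ k + K)).trans hs'.1.le
        have hs0 : t 0 ≤ s := hA0.le.trans hsA
        refine ⟨-(f s (x (ζ (k + K)))) + c * p s, ?_, (hE (k+K) s hs').add ((hPderiv s hsA).const_mul c)⟩
        have h1 := hfp_pos s hs0 (x (ζ (k+K))) (hxpos _ (hζA _ (by omega)))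
        have h2 := hφb (k + K) (by omega)
        have h3 := hp_nonneg s hs0
        nlinarith
    have hPA : P A = 0 := intervalIntegral.integral_same
    -- choose v large
    have hPtop : Tendsto P atTop atTop := by
      have heq : P =ᶠ[atTop] fun v => (∫ s in (t 0)..v, p s) - ∫ s in (t 0)..A, p s := by
        filter_upwards [eventually_ge_atTop A] with v hv
        have := intervalIntegral.integral_add_adjacent_intervals
          (hii hp_cont le_rfl hA0.le) (hii hp_cont hA0.le hv)
        simp only [hPdef]; linarith [this]
      apply Tendsto.congr' heq.symm
      simpa [sub_eq_add_neg] using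
        tendsto_atTop_add_const_right atTop (-(∫ s in (t 0)..A, p s)) hP
    obtain ⟨v, hvv⟩ := ((hPtop.eventually_ge_atTop ((g A + 1)/c)).and (eventually_ge_atTop A)).exists
    obtain ⟨hv, hvA⟩ := hvv
    have h1 : h v ≤ h A := hh_anti (mem_Ici.2 le_rfl) (mem_Ici.2 hvA) hvA
    have h2 : 0 ≤ g v := hcase v hvA
    have h3 : (g A + 1)/c ≤ P v := hv
    have h4 : g A + 1 ≤ c * P v := by
      rw [div_le_iff₀ hc_pos] at h3; linarith [h3]
    simp only [hh, hPA] at h1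
    nlinarith
  · -- Case 1 : r x' becomes negative
    push_neg at hcase
    obtain ⟨v0, hv0A, hv0neg⟩ := hcase
    have hv00 : t 0 ≤ v0 := hIciA hv0A
    -- x' v ≤ g v0 * (1 / r v) for v ≥ v0
    have hx'le : ∀ v, v0 ≤ v → x' v ≤ g v0 * (1 / r v) := by
      intro v hv
      have hgv : g v ≤ g v0 := hg_anti hv0A (mem_Ici.2 (hv0A.trans' le_rfl |>.trans hv)) hv
      have hrv : 0 < r v := hr_pos v (hv00.trans hv)
      rw [mul_one_div, le_div_iff₀ hrv]
      calc x' v * r v = g v := by rw [hg]; ring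
        _ ≤ g v0 := hgv
    have hxle : ∀ v, v0 ≤ v → x v ≤ x v0 + g v0 * ∫ s in v0..v, 1 / r s := by
      intro v hv
      have hftc : (∫ s in v0..v, x' s) = x v - x v0 := by
        apply intervalIntegral.integral_eq_sub_of_hasDerivAt
        · intro s hs
          rw [uIcc_of_le hv] at hs
          exact hx_deriv s (mem_Ici.2 (hv00.trans hs.1))
        · exact hii hx'_cont hv00 hv
      have hmono : (∫ s in v0..v, x' s) ≤ ∫ s in v0..v, g v0 * (1 / r s) := by
        apply intervalIntegral.integral_mono_on hv (hii hx'_cont hv00 hv)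
          ((hii hrinv_cont hv00 hv).const_mul (g v0))
        intro s hs
        exact hx'le s hs.1
      rw [intervalIntegral.integral_const_mul] at hmono
      linarith
    -- the integral of 1/r from v0 diverges
    have hRtop : Tendsto (fun v => ∫ s in v0..v, 1 / r s) atTop atTop := by
      have heq : (fun v => ∫ s in v0..v, 1 / r s)
          =ᶠ[atTop] fun v => (∫ s in (t 0)..v, 1 / r s) - ∫ s in (t 0)..v0, 1 / r s := by
        filter_upwards [eventually_ge_atTop v0] with v hv
        have := intervalIntegral.integral_add_adjacent_intervals
          (hii hrinv_cont le_rfl hv00) (hii hrinv_cont hv00 hv)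
        linarith [this]
      apply Tendsto.congr' heq.symm
      simpa [sub_eq_add_neg] using
        tendsto_atTop_add_const_right atTop (-(∫ s in (t 0)..v0, 1 / r s)) hR
    obtain ⟨v, hvv⟩ := ((hRtop.eventually_ge_atTop ((x v0 + 1)/(-(g v0)))).and
      (eventually_ge_atTop v0)).exists
    obtain ⟨hv, hvv0⟩ := hvv
    have h1 := hxle v hvv0
    have h2 : (x v0 + 1)/(-(g v0)) ≤ ∫ s in v0..v, 1 / r s := hv
    have hgneg : 0 < -(g v0) := by linarith
    have h3 : x v0 + 1 ≤ (-(g v0)) * ∫ s in v0..v, 1 / r s := by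
      rw [div_le_iff₀ hgneg] at h2; linarith [h2]
    have h4 : 0 < x v := hxpos v (hv0A.trans hvv0)
    nlinarith

theorem stmt1
    (t ζ : ℕ → ℝ) (ht_mono : StrictMono t)
    (ht_top : Tendsto t atTop atTop)
    (hζ : ∀ k : ℕ, ζ k ∈ Icc (t k) (t (k+1)))
    (r : ℝ → ℝ) (hr_cont : ContinuousOn r (Ici (t 0)))
    (hr_pos : ∀ s ∈ Ici (t 0), 0 < r s)
    (f : ℝ → ℝ → ℝ)
    (hf_cont : ContinuousOn (fun q : ℝ × ℝ => f q.1 q.2) ((Ici (t 0)) ×ˢ (univ : Set ℝ)))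
    (hf_sign : ∀ s ∈ Ici (t 0), ∀ y : ℝ, y ≠ 0 → 0 < y * f s y)
    (x x' : ℝ → ℝ)
    (hx_deriv : ∀ s ∈ Ici (t 0), HasDerivAt x (x' s) s)
    (hx'_cont : ContinuousOn x' (Ici (t 0)))
    (hE : ∀ k : ℕ, ∀ s ∈ Ioo (t k) (t (k+1)),
      HasDerivAt (fun u => r u * x' u) (-(f s (x (ζ k)))) s)
    (p : ℝ → ℝ) (hp_cont : ContinuousOn p (Ici (t 0)))
    (hp_nonneg : ∀ s ∈ Ici (t 0), 0 ≤ p s)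
    (φ : ℝ → ℝ) (hφ_smooth : ContDiff ℝ 1 φ) (hφ_mono : Monotone φ)
    (hφ_sign : ∀ y : ℝ, y ≠ 0 → 0 < y * φ y)
    (hfp_pos : ∀ s ∈ Ici (t 0), ∀ y : ℝ, 0 < y → p s * φ y ≤ f s y)
    (hfp_neg : ∀ s ∈ Ici (t 0), ∀ y : ℝ, y < 0 → f s y ≤ p s * φ y)
    (hr_int : ∫⁻ s in Ioi (t 0), ENNReal.ofReal (1 / r s) = ⊤)
    (hp_int : ∫⁻ s in Ioi (t 0), ENNReal.ofReal (p s) = ⊤) :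
    ∃ a b : ℕ → ℝ, Tendsto a atTop atTop ∧ Tendsto b atTop atTop ∧
      ∀ n : ℕ, x (a n) ≤ 0 ∧ 0 ≤ x (b n) := by
  have claim_a : ∀ n : ℕ, ∃ v, (n : ℝ) ≤ v ∧ x v ≤ 0 := fun n =>
    key_lemma t ζ ht_mono ht_top hζ r hr_cont hr_pos f hf_sign x x' hx_deriv hx'_cont hE
      p hp_cont hp_nonneg φ hφ_mono hφ_sign hfp_pos hr_int hp_int n
  have claim_b : ∀ n : ℕ, ∃ v, (n : ℝ) ≤ v ∧ 0 ≤ x v := by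
    intro n
    have key := key_lemma t ζ ht_mono ht_top hζ r hr_cont hr_pos
      (fun s y => -(f s (-y)))
      (by
        intro s hs y hy
        have := hf_sign s hs (-y) (neg_ne_zero.2 hy)
        show 0 < y * -(f s (-y))
        nlinarith)
      (fun s => -(x s)) (fun s => -(x' s))
      (fun s hs => (hx_deriv s hs).neg) hx'_cont.neg
      (by
        intro k s hs
        have := (hE k s hs).neg
        simp only [neg_neg] at this ⊢
        simp only [mul_neg]; exact this)
      p hp_cont hp_nonneg
      (fun y => -(φ (-y)))
      (fun a b hab => neg_le_neg (hφ_mono (neg_le_neg hab)))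
      (by
        intro y hy
        have := hφ_sign (-y) (neg_ne_zero.2 hy)
        show 0 < y * -(φ (-y))
        nlinarith)
      (by
        intro s hs y hy
        have := hfp_neg s hs (-y) (by linarith)
        show p s * -(φ (-y)) ≤ -(f s (-y))
        nlinarith)
      hr_int hp_int n
    obtain ⟨v, hv1, hv2⟩ := key
    exact ⟨v, hv1, by linarith⟩
  choose a ha1 ha2 using claim_a
  choose b hb1 hb2 using claim_b
  refine ⟨a, b, ?_, ?_, fun n => ⟨ha2 n, hb2 n⟩⟩
  · exact tendsto_atTop_mono ha1 tendsto_natCast_atTop_atTop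
  · exact tendsto_atTop_mono hb1 tendsto_natCast_atTop_atTop
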